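/- If X is standard Gaussian, then the amplifier φ(a) = E[X·erf(X·alg⁻¹(a)/√2)] equals √(2/π)·a for all a ∈ (-1,1), i.e. φ is exactly linear. -/

import Mathlib

open MeasureTheory Real

noncomputable def erf (x : ℝ) : ℝ := (2 / Real.sqrt π) * ∫ s in (0:ℝ)..x, Real.exp (-s ^ 2)

noncomputable def algInv (a : ℝ) : ℝ := a / Real.sqrt (1 - a ^ 2)

/-- Standard Gaussian density. -/
noncomputable def gauss (z : ℝ) : ℝ := (Real.sqrt (2 * π))⁻¹ * Real.exp (-z ^ 2 / 2)

lemma cont_exp_neg_sq : Continuous fun s : ℝ => Real.exp (-s ^ 2) :=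
  Real.continuous_exp.comp (continuous_pow 2).neg

lemma erf_hasDerivAt (x : ℝ) :
    HasDerivAt erf (2 / Real.sqrt π * Real.exp (-x ^ 2)) x := by
  have h := (cont_exp_neg_sq.integral_hasStrictDerivAt 0 x).hasDerivAt
  have h2 := h.const_mul (2 / Real.sqrt π)
  exact h2

lemma erf_abs_le (x : ℝ) : |erf x| ≤ 2 / Real.sqrt π * |x| := by
  have h : ‖∫ s in (0:ℝ)..x, Real.exp (-s ^ 2)‖ ≤ 1 * |x - 0| := by
    apply intervalIntegral.norm_integral_le_of_norm_le_const
    intro s _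
    rw [Real.norm_eq_abs, abs_of_pos (Real.exp_pos _)]
    exact Real.exp_le_one_iff.2 (neg_nonpos.2 (sq_nonneg s))
  rw [Real.norm_eq_abs, one_mul, sub_zero] at h
  have h2 : (0:ℝ) ≤ 2 / Real.sqrt π := by positivity
  calc |erf x| = 2 / Real.sqrt π * |∫ s in (0:ℝ)..x, Real.exp (-s ^ 2)| := by
        rw [erf, abs_mul, abs_of_nonneg h2]
    _ ≤ 2 / Real.sqrt π * |x| := mul_le_mul_of_nonneg_left h h2

lemma erf_continuous : Continuous erf := by
  have : Continuous fun x : ℝ => ∫ s in (0:ℝ)..x, Real.exp (-s ^ 2) := by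
    apply intervalIntegral.continuous_primitive
    exact fun a b => cont_exp_neg_sq.intervalIntegrable a b
  exact continuous_const.mul this

lemma gauss_hasDerivAt (x : ℝ) : HasDerivAt (fun z => -gauss z) (x * gauss x) x := by
  have h1 : HasDerivAt (fun z : ℝ => -z ^ 2 / 2) (-x) x := by
    have := ((hasDerivAt_pow 2 x).neg).div_const 2
    exact this.congr_deriv (by norm_num; ring)
  have h2 : HasDerivAt (fun z : ℝ => Real.exp (-z ^ 2 / 2)) (Real.exp (-x ^ 2 / 2) * (-x)) x :=
    (Real.hasDerivAt_exp _).comp x h1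
  have h3 := (h2.const_mul ((Real.sqrt (2 * π))⁻¹)).neg
  exact h3.congr_deriv (by rw [gauss]; ring)

lemma gauss_nonneg (x : ℝ) : 0 ≤ gauss x := by
  unfold gauss; positivity

lemma gauss_continuous : Continuous gauss :=
  continuous_const.mul (Continuous.rexp ((continuous_pow 2).neg.div_const 2))

lemma gauss_le (x : ℝ) : gauss x ≤ Real.exp (-(1/2 : ℝ) * x ^ 2) := by
  have h1 : (Real.sqrt (2 * π))⁻¹ ≤ 1 := by
    rw [inv_le_one_iff₀]
    right
    rw [show (1:ℝ) = Real.sqrt 1 by simp]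
    exact Real.sqrt_le_sqrt (by nlinarith [Real.pi_gt_three])
  calc gauss x ≤ 1 * Real.exp (-x ^ 2 / 2) :=
        mul_le_mul_of_nonneg_right h1 (Real.exp_pos _).le
    _ = Real.exp (-(1/2 : ℝ) * x ^ 2) := by rw [one_mul]; ring_nf

lemma integrable_sq_mul_gauss_aux :
    Integrable fun x : ℝ => x ^ 2 * Real.exp (-(1/2 : ℝ) * x ^ 2) := by
  have := integrable_rpow_mul_exp_neg_mul_sq (b := 1/2) (by norm_num) (s := 2) (by norm_num)
  have heq : ∀ x : ℝ, x ^ (2:ℝ) = x ^ 2 := fun x => by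
    rw [show (2:ℝ) = ((2:ℕ):ℝ) by norm_num, Real.rpow_natCast]
  simpa [heq] using this

lemma key (b : ℝ) :
    (∫ z, z * erf (b * z) * gauss z) =
      Real.sqrt 2 * b / (Real.sqrt π * Real.sqrt (b ^ 2 + 1/2)) := by
  have hπ : (0:ℝ) < π := Real.pi_pos
  set C : ℝ := 2 / Real.sqrt π with hC
  have hC0 : 0 ≤ C := by positivity
  have hu : ∀ x, HasDerivAt (fun z => erf (b * z)) (C * Real.exp (-(b * x) ^ 2) * b) x := by
    intro x
    have hin : HasDerivAt (fun y : ℝ => b * y) b x := by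
      simpa using (hasDerivAt_id x).const_mul b
    exact (erf_hasDerivAt (b * x)).comp x hin
  have hv : ∀ x, HasDerivAt (fun z => -gauss z) (x * gauss x) x := gauss_hasDerivAt
  have habs : ∀ x : ℝ, |erf (b * x)| ≤ C * |b| * |x| := by
    intro x
    calc |erf (b * x)| ≤ C * |b * x| := erf_abs_le (b * x)
      _ = C * |b| * |x| := by rw [abs_mul]; ring
  have cont1 : Continuous fun x : ℝ => erf (b * x) :=
    erf_continuous.comp (continuous_const.mul continuous_id)
  have huv' : Integrable (fun x : ℝ => erf (b * x) * (x * gauss x)) := by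
    apply Integrable.mono' (integrable_sq_mul_gauss_aux.const_mul (C * |b|))
      ((cont1.mul (continuous_id.mul gauss_continuous)).aestronglyMeasurable)
    filter_upwards with x
    simp only [Pi.mul_apply, id]
    rw [Real.norm_eq_abs, abs_mul, abs_mul, abs_of_nonneg (gauss_nonneg x)]
    calc |erf (b * x)| * (|x| * gauss x)
        ≤ C * |b| * |x| * (|x| * gauss x) :=
          mul_le_mul_of_nonneg_right (habs x) (mul_nonneg (abs_nonneg x) (gauss_nonneg x))
      _ = C * |b| * (x ^ 2 * gauss x) := by
          rw [show C * |b| * |x| * (|x| * gauss x) = C * |b| * (|x| ^ 2 * gauss x) by ring, sq_abs]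
      _ ≤ C * |b| * (x ^ 2 * Real.exp (-(1/2 : ℝ) * x ^ 2)) := by
          have := mul_le_mul_of_nonneg_left (gauss_le x) (sq_nonneg x)
          exact mul_le_mul_of_nonneg_left this (by positivity)
  have hu'v : Integrable (fun x : ℝ => (C * Real.exp (-(b * x) ^ 2) * b) * (-gauss x)) := by
    apply Integrable.mono'
      ((integrable_exp_neg_mul_sq (b := 1/2) (by norm_num)).const_mul (C * |b|))
      (((continuous_const.mul (Continuous.rexp ((continuous_const.mul continuous_id).pow 2).neg)).mul
        continuous_const).mul gauss_continuous.neg).aestronglyMeasurable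
    filter_upwards with x
    simp only [Pi.mul_apply, Pi.neg_apply]
    rw [← hC]
    rw [Real.norm_eq_abs, abs_mul, abs_neg, abs_of_nonneg (gauss_nonneg x), abs_mul, abs_mul,
      abs_of_nonneg hC0, abs_of_nonneg (Real.exp_pos _).le]
    have he1 : Real.exp (-(b * x) ^ 2) ≤ 1 := Real.exp_le_one_iff.2 (neg_nonpos.2 (sq_nonneg _))
    calc C * Real.exp (-(b * x) ^ 2) * |b| * gauss x
        ≤ C * 1 * |b| * Real.exp (-(1/2:ℝ) * x ^ 2) := by
          apply mul_le_mul _ (gauss_le x) (gauss_nonneg x) (by positivity)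
          exact mul_le_mul_of_nonneg_right
            (mul_le_mul_of_nonneg_left he1 hC0) (abs_nonneg b)
      _ = C * |b| * Real.exp (-(1/2:ℝ) * x ^ 2) := by ring
  have huv : Integrable (fun x : ℝ => erf (b * x) * (-gauss x)) := by
    apply Integrable.mono'
      (((integrable_mul_exp_neg_mul_sq (b := 1/2) (by norm_num)).abs).const_mul (C * |b|))
      (cont1.mul gauss_continuous.neg).aestronglyMeasurable
    filter_upwards with x
    simp only [Pi.mul_apply, Pi.neg_apply]
    rw [Real.norm_eq_abs, abs_mul, abs_neg, abs_of_nonneg (gauss_nonneg x), abs_mul,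
      abs_of_nonneg (Real.exp_pos (-(1/2:ℝ) * x ^ 2)).le]
    calc |erf (b * x)| * gauss x
        ≤ C * |b| * |x| * gauss x := mul_le_mul_of_nonneg_right (habs x) (gauss_nonneg x)
      _ ≤ C * |b| * (|x| * Real.exp (-(1/2:ℝ) * x ^ 2)) := by
          have := mul_le_mul_of_nonneg_left (gauss_le x) (abs_nonneg x)
          have h2 := mul_le_mul_of_nonneg_left this (mul_nonneg hC0 (abs_nonneg b))
          calc C * |b| * |x| * gauss x = C * |b| * (|x| * gauss x) := by ring
            _ ≤ C * |b| * (|x| * Real.exp (-(1/2:ℝ) * x ^ 2)) := h2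
  have hparts := integral_mul_deriv_eq_deriv_mul_of_integrable (fun x _ => hu x) (fun x _ => hv x) huv' hu'v huv
  have hL : (∫ z, z * erf (b * z) * gauss z) = ∫ x, erf (b * x) * (x * gauss x) := by
    congr 1; funext x; ring
  rw [hL, hparts]
  have hcoef : (0:ℝ) < b ^ 2 + 1/2 := by positivity
  have hg : (∫ x : ℝ, Real.exp (-(b ^ 2 + 1/2) * x ^ 2)) = Real.sqrt (π / (b ^ 2 + 1/2)) :=
    integral_gaussian _
  have hre : (∫ x : ℝ, (C * Real.exp (-(b * x) ^ 2) * b) * (-gauss x))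
      = -(C * b * (Real.sqrt (2 * π))⁻¹) * ∫ x : ℝ, Real.exp (-(b ^ 2 + 1/2) * x ^ 2) := by
    rw [← integral_const_mul]
    congr 1; funext x
    rw [gauss, show -(b ^ 2 + 1/2) * x ^ 2 = -(b * x) ^ 2 + -x ^ 2 / 2 by ring, Real.exp_add]
    ring
  rw [hre, hg]
  -- final algebra
  have hs : (0:ℝ) < Real.sqrt (b ^ 2 + 1/2) := Real.sqrt_pos.2 hcoef
  have hsπ : (0:ℝ) < Real.sqrt π := Real.sqrt_pos.2 hπ
  have hs2 : (0:ℝ) < Real.sqrt 2 := Real.sqrt_pos.2 (by norm_num)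
  have h2π : Real.sqrt (2 * π) = Real.sqrt 2 * Real.sqrt π := Real.sqrt_mul (by norm_num) _
  have hdiv : Real.sqrt (π / (b ^ 2 + 1/2)) = Real.sqrt π / Real.sqrt (b ^ 2 + 1/2) :=
    Real.sqrt_div hπ.le _
  have h22 : Real.sqrt 2 * Real.sqrt 2 = 2 := Real.mul_self_sqrt (by norm_num)
  have halg : ∀ X : ℝ, 0 < X →
      -(-(2 / Real.sqrt π * b * (Real.sqrt 2 * Real.sqrt π)⁻¹) * (Real.sqrt π / X))
        = Real.sqrt 2 * b / (Real.sqrt π * X) := by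
    intro X hX
    field_simp
    linear_combination (-b) * h22
  rw [h2π, hdiv, hC]
  exact halg _ hs

theorem gaussian_amplifier_linear :
    ∀ a ∈ Set.Ioo (-1 : ℝ) 1,
      (∫ z, z * erf (z * algInv a / Real.sqrt 2) * gauss z) =
        Real.sqrt (2 / π) * a := by
  rintro a ⟨ha1, ha2⟩
  have hπ : (0:ℝ) < π := Real.pi_pos
  have h1a : (0:ℝ) < 1 - a ^ 2 := by nlinarith
  set s : ℝ := Real.sqrt (1 - a ^ 2) with hsdef
  have hs : 0 < s := Real.sqrt_pos.2 h1a
  have hs2 : s ^ 2 = 1 - a ^ 2 := Real.sq_sqrt h1a.le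
  set b : ℝ := algInv a / Real.sqrt 2 with hbdef
  have hrw : (∫ z, z * erf (z * algInv a / Real.sqrt 2) * gauss z)
      = ∫ z, z * erf (b * z) * gauss z := by
    congr 1; funext z
    congr 2
    rw [hbdef]; ring
  rw [hrw, key b]
  have h22 : Real.sqrt 2 * Real.sqrt 2 = 2 := Real.mul_self_sqrt (by norm_num)
  have hsq2 : (0:ℝ) < Real.sqrt 2 := Real.sqrt_pos.2 (by norm_num)
  have hsπ : (0:ℝ) < Real.sqrt π := Real.sqrt_pos.2 hπ
  have hb2 : b ^ 2 + 1/2 = 1 / (2 * s ^ 2) := by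
    rw [hbdef, algInv, ← hsdef]
    rw [div_pow, div_pow, Real.sq_sqrt (by norm_num : (0:ℝ) ≤ 2), hs2]
    field_simp
    ring
  have hsqrt : Real.sqrt (b ^ 2 + 1/2) = 1 / (Real.sqrt 2 * s) := by
    rw [hb2, one_div, Real.sqrt_inv, Real.sqrt_mul (by norm_num : (0:ℝ) ≤ 2),
      Real.sqrt_sq hs.le, one_div]
  have hb : b = a / (s * Real.sqrt 2) := by
    rw [hbdef, algInv, ← hsdef]; ring
  rw [hsqrt, hb]
  have h2π : Real.sqrt (2 / π) = Real.sqrt 2 / Real.sqrt π := Real.sqrt_div (by norm_num) _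
  rw [h2π]
  field_simp
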